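/- Let ρ₁ > 0, 0 ≤ a ≤ 1, let c : ℝ → ℝ satisfy a ≤ c(x) ≤ 1 for all x ≥ ρ₁, let h : ℝ → ℝ be differentiable on [ρ₁, ∞) with h'(x) = c(x) h(x) / x for x ≥ ρ₁ and h(ρ₁) = h₁ > 0, and let p : ℝ → ℝ be differentiable on [ρ₁, ∞) with p'(x) = c(x) h(x) for x ≥ ρ₁ and p(ρ₁) = p₁. Then for all x ≥ ρ₁: (a ρ₁ h₁ / (1 + a)) · ((x/ρ₁)^{1+a} − 1) ≤ p(x) − p₁ ≤ (ρ₁ h₁ / 2) · ((x/ρ₁)² − 1). -/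

import Mathlib

private lemma mono_aux {ρ₁ : ℝ} {f f' : ℝ → ℝ}
    (hf : ∀ x ≥ ρ₁, HasDerivAt f (f' x) x)
    (h0 : ∀ x ≥ ρ₁, 0 ≤ f' x) : MonotoneOn f (Set.Ici ρ₁) := by
  apply monotoneOn_of_deriv_nonneg (convex_Ici ρ₁)
  · exact fun x hx => (hf x hx).continuousAt.continuousWithinAt
  · intro x hx
    rw [interior_Ici] at hx
    exact (hf x hx.le).differentiableAt.differentiableWithinAt
  · intro x hx
    rw [interior_Ici] at hx
    rw [(hf x hx.le).deriv]
    exact h0 x hx.le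

/-- Pressure bounds for an irrotational perfect fluid: with `dh/dρ = c_s² h / ρ`,
`dp/dρ = c_s² h`, and causality bounds `a ≤ c_s² ≤ 1`, one has
`(a ρ₁ h₁/(1+a)) ((ρ/ρ₁)^(1+a) − 1) ≤ p − p₁ ≤ (ρ₁ h₁/2) ((ρ/ρ₁)² − 1)`. -/
theorem pressure_bounds
    (ρ₁ a h₁ p₁ : ℝ) (hρ₁ : 0 < ρ₁) (ha₀ : 0 ≤ a) (ha₁ : a ≤ 1)
    (c h p : ℝ → ℝ)
    (hc : ∀ x ≥ ρ₁, a ≤ c x ∧ c x ≤ 1)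
    (hh : ∀ x ≥ ρ₁, HasDerivAt h (c x * h x / x) x)
    (hhinit : h ρ₁ = h₁) (hh₁ : 0 < h₁)
    (hp : ∀ x ≥ ρ₁, HasDerivAt p (c x * h x) x)
    (hpinit : p ρ₁ = p₁) :
    ∀ x ≥ ρ₁,
      a * ρ₁ * h₁ / (1 + a) * ((x / ρ₁) ^ (1 + a) - 1) ≤ p x - p₁ ∧
      p x - p₁ ≤ ρ₁ * h₁ / 2 * ((x / ρ₁) ^ (2 : ℕ) - 1) := by
  have hxpos : ∀ x ≥ ρ₁, (0:ℝ) < x := fun x hx => lt_of_lt_of_le hρ₁ hx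
  -- Step 1: h^2 is monotone on Ici ρ₁
  have hsq : MonotoneOn (fun t => h t * h t) (Set.Ici ρ₁) := by
    apply mono_aux (f' := fun x => c x * h x / x * h x + h x * (c x * h x / x))
    · exact fun x hx => (hh x hx).mul (hh x hx)
    · intro x hx
      have hx0 := hxpos x hx
      have hca := (hc x hx).1
      have e : c x * h x / x * h x + h x * (c x * h x / x)
          = 2 * c x * (h x * h x) / x := by ring
      rw [e]
      have hcx : 0 ≤ c x := le_trans ha₀ hca
      have := mul_self_nonneg (h x)
      apply div_nonneg _ hx0.le
      nlinarith
  -- Step 2: h never vanishes on Ici ρ₁, hence is positive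
  have hne : ∀ x ≥ ρ₁, h x * h x ≥ h₁ * h₁ := by
    intro x hx
    have := hsq Set.self_mem_Ici (Set.mem_Ici.mpr hx) hx
    simpa [hhinit] using this
  have hpos : ∀ x ≥ ρ₁, 0 < h x := by
    intro x hx
    by_contra hcon
    push_neg at hcon
    have hcont : ContinuousOn h (Set.Icc ρ₁ x) := fun t ht =>
      (hh t ht.1).continuousAt.continuousWithinAt
    have hxneg : h x < 0 := by
      rcases lt_or_eq_of_le hcon with h' | h'
      · exact h'
      · exfalso; nlinarith [hne x hx]
    have h0mem : (0:ℝ) ∈ Set.Icc (h x) (h ρ₁) := ⟨hxneg.le, by rw [hhinit]; exact hh₁.le⟩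
    obtain ⟨t, ht, hht⟩ := intermediate_value_Icc' hx hcont h0mem
    have := hne t ht.1
    nlinarith
  -- Step 3: upper bound h x ≤ h₁ * x / ρ₁ via antitonicity of h t / t
  have hub : ∀ x ≥ ρ₁, h x ≤ h₁ * x / ρ₁ := by
    have hmono : MonotoneOn (fun t => - (h t / t)) (Set.Ici ρ₁) := by
      apply mono_aux (f' := fun x => -((c x * h x / x * x - h x * 1) / x ^ 2))
      · intro x hx
        exact ((hh x hx).div (hasDerivAt_id x) (hxpos x hx).ne').neg
      · intro x hx
        have hx0 := hxpos x hx
        have hc1 := (hc x hx).2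
        have hhx := hpos x hx
        have hkey : c x * h x / x * x = c x * h x := by field_simp
        rw [neg_nonneg, hkey]
        apply div_nonpos_of_nonpos_of_nonneg
        · nlinarith
        · positivity
    intro x hx
    have hmle := hmono Set.self_mem_Ici (Set.mem_Ici.mpr hx) hx
    simp only [hhinit, neg_le_neg_iff] at hmle
    have hx0 := hxpos x hx
    rw [div_le_div_iff₀ hx0 hρ₁] at hmle
    rw [le_div_iff₀ hρ₁]
    linarith
  -- Step 4: lower bound h₁ * (x/ρ₁)^a ≤ h x via monotonicity of h t * t^(-a)
  have hlb : ∀ x ≥ ρ₁, h₁ * (x / ρ₁) ^ a ≤ h x := by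
    have hmono : MonotoneOn (fun t => h t * t ^ (-a)) (Set.Ici ρ₁) := by
      apply mono_aux
        (f' := fun x => c x * h x / x * x ^ (-a) + h x * (-a * x ^ (-a - 1) * 1))
      · intro x hx
        exact (hh x hx).mul
          (by simpa using (Real.hasDerivAt_rpow_const (p := -a) (Or.inl (hxpos x hx).ne')))
      · intro x hx
        have hx0 := hxpos x hx
        have hca := (hc x hx).1
        have hhx := hpos x hx
        have e1 : x ^ (-a - 1) = x ^ (-a) / x := by
          rw [Real.rpow_sub hx0, Real.rpow_one]
        rw [e1]
        have e2 : c x * h x / x * x ^ (-a) + h x * (-a * (x ^ (-a) / x) * 1)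
            = (c x - a) * h x * x ^ (-a) / x := by ring
        rw [e2]
        have h1 : (0:ℝ) ≤ x ^ (-a) := (Real.rpow_pos_of_pos hx0 _).le
        have h2 : (0:ℝ) ≤ c x - a := sub_nonneg.mpr hca
        positivity
    intro x hx
    have key := hmono Set.self_mem_Ici (Set.mem_Ici.mpr hx) hx
    simp only [hhinit] at key
    have hx0 := hxpos x hx
    have hxa : (0:ℝ) < x ^ a := Real.rpow_pos_of_pos hx0 _
    have hra : (0:ℝ) < ρ₁ ^ a := Real.rpow_pos_of_pos hρ₁ _
    rw [Real.rpow_neg hρ₁.le, Real.rpow_neg hx0.le] at key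
    calc h₁ * (x / ρ₁) ^ a = h₁ * (ρ₁ ^ a)⁻¹ * x ^ a := by
          rw [Real.div_rpow hx0.le hρ₁.le]; ring
    _ ≤ h x * (x ^ a)⁻¹ * x ^ a := mul_le_mul_of_nonneg_right key hxa.le
    _ = h x := by field_simp
  -- Step 5: upper bound for p
  intro x hx
  have hx0 := hxpos x hx
  constructor
  · -- lower bound: G t = p t - p₁ - a ρ₁ h₁/(1+a) ((t/ρ₁)^(1+a) - 1) monotone
    have hmono : MonotoneOn
        (fun t => p t - p₁ - a * ρ₁ * h₁ / (1 + a) * ((t / ρ₁) ^ (1 + a) - 1))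
        (Set.Ici ρ₁) := by
      apply mono_aux (f' := fun t =>
        c t * h t - a * ρ₁ * h₁ / (1 + a) * ((1 + a) * (t / ρ₁) ^ (1 + a - 1) * (1 / ρ₁)))
      · intro t ht
        have ht0 := hxpos t ht
        have hdiv : HasDerivAt (fun t : ℝ => t / ρ₁) (1 / ρ₁) t := by
          simpa using (hasDerivAt_id t).div_const ρ₁
        have hrpow : HasDerivAt (fun t : ℝ => (t / ρ₁) ^ (1 + a))
            ((1 + a) * (t / ρ₁) ^ (1 + a - 1) * (1 / ρ₁)) t := by
          have := hdiv.rpow_const (p := 1 + a) (Or.inl (by positivity))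
          convert this using 1
          ring
        exact ((hp t ht).sub_const p₁).sub ((hrpow.sub_const 1).const_mul _)
      · intro t ht
        have ht0 := hxpos t ht
        have hca := (hc t ht).1
        have hhx := hpos t ht
        have h1a : (0:ℝ) < 1 + a := by linarith
        have e : 1 + a - 1 = a := by ring
        rw [e]
        have e2 : a * ρ₁ * h₁ / (1 + a) * ((1 + a) * (t / ρ₁) ^ a * (1 / ρ₁))
            = a * (h₁ * (t / ρ₁) ^ a) := by field_simp
        rw [e2]
        have hb := hlb t ht
        have : a * (h₁ * (t / ρ₁) ^ a) ≤ a * h t := by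
          exact mul_le_mul_of_nonneg_left hb ha₀
        have hch : a * h t ≤ c t * h t := mul_le_mul_of_nonneg_right hca hhx.le
        linarith
    have key := hmono Set.self_mem_Ici (Set.mem_Ici.mpr hx) hx
    have hval : (ρ₁ / ρ₁ : ℝ) ^ (1 + a) = 1 := by
      rw [div_self hρ₁.ne', Real.one_rpow]
    simp only [hpinit, hval] at key
    simpa using key
  · -- upper bound: F t = ρ₁ h₁/2 ((t/ρ₁)^2 - 1) - (p t - p₁) monotone
    have hmono : MonotoneOn
        (fun t => ρ₁ * h₁ / 2 * ((t / ρ₁) ^ (2:ℕ) - 1) - (p t - p₁))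
        (Set.Ici ρ₁) := by
      apply mono_aux (f' := fun t =>
        ρ₁ * h₁ / 2 * ((2:ℕ) * (t / ρ₁) ^ (1:ℕ) * (1 / ρ₁)) - c t * h t)
      · intro t ht
        have hdiv : HasDerivAt (fun t : ℝ => t / ρ₁) (1 / ρ₁) t := by
          simpa using (hasDerivAt_id t).div_const ρ₁
        have hpow : HasDerivAt (fun t : ℝ => (t / ρ₁) ^ (2:ℕ))
            ((2:ℕ) * (t / ρ₁) ^ (1:ℕ) * (1 / ρ₁)) t := by
          simpa using hdiv.fun_pow 2
        exact (((hpow.sub_const 1).const_mul _)).sub ((hp t ht).sub_const p₁)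
      · intro t ht
        have ht0 := hxpos t ht
        have hc1 := (hc t ht).2
        have hhx := hpos t ht
        have hb := hub t ht
        have e : ρ₁ * h₁ / 2 * ((2:ℕ) * (t / ρ₁) ^ (1:ℕ) * (1 / ρ₁)) = h₁ * t / ρ₁ := by
          field_simp; ring
        rw [e]
        have hch : c t * h t ≤ h t := by nlinarith
        linarith
    have key := hmono Set.self_mem_Ici (Set.mem_Ici.mpr hx) hx
    have hval : (ρ₁ / ρ₁ : ℝ) ^ (2:ℕ) = 1 := by rw [div_self hρ₁.ne']; norm_num
    simp only [hpinit, hval] at key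
    linarith [key]
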